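/- Let G be a cycle with an assignment of lists L to its edges, where each list has size at least 2. Then there is a proper L-edge-colouring of G unless G is an odd cycle and all lists are identical sets of size exactly 2. -/

import Mathlib

open SimpleGraph Sum
open scoped Fin.NatCast Fin.CommRing

/-- Two edges of `G` are adjacent if they are distinct edges sharing a vertex. -/
def EdgeAdj {V : Type*} (G : SimpleGraph V) (e f : Sym2 V) : Prop :=
  e ∈ G.edgeSet ∧ f ∈ G.edgeSet ∧ e ≠ f ∧ ∃ v, v ∈ e ∧ v ∈ f

/-- A proper edge-colouring of `G` choosing each edge's colour from its list. -/
def IsListEdgeColoring {V : Type*} (G : SimpleGraph V) (L : Sym2 V → Finset ℕ)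
    (C : Sym2 V → ℕ) : Prop :=
  (∀ e ∈ G.edgeSet, C e ∈ L e) ∧ ∀ e f, EdgeAdj G e f → C e ≠ C f

/-- Greedy colouring of a chain of lists: start with `a`, and at each later
position pick an element of the list different from the previous choice. -/
noncomputable def greedyCol (ℓ : ℕ → Finset ℕ) (a : ℕ) : ℕ → ℕ
  | 0 => a
  | i + 1 =>
    if h : 1 < (ℓ (i + 1)).card then
      (Finset.exists_mem_ne h (greedyCol ℓ a i)).choose
    else 0

lemma greedyCol_succ_spec (ℓ : ℕ → Finset ℕ) (a : ℕ) (i : ℕ)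
    (h : 1 < (ℓ (i + 1)).card) :
    greedyCol ℓ a (i + 1) ∈ ℓ (i + 1) ∧ greedyCol ℓ a (i + 1) ≠ greedyCol ℓ a i := by
  have hs := (Finset.exists_mem_ne h (greedyCol ℓ a i)).choose_spec
  simp only [greedyCol, dif_pos h]
  exact hs

lemma greedyCol_mem (ℓ : ℕ → Finset ℕ) (a : ℕ) (ha : a ∈ ℓ 0)
    (hc : ∀ j, 1 < (ℓ j).card) : ∀ m, greedyCol ℓ a m ∈ ℓ m
  | 0 => ha
  | m + 1 => (greedyCol_succ_spec ℓ a m (hc _)).1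

/-- Core combinatorial lemma: list colouring of the cyclically ordered
family of lists `ℓ 0, …, ℓ (n-1)`. -/
lemma cycle_core (n : ℕ) [NeZero n] (hn : 3 ≤ n) (ℓ : Fin n → Finset ℕ)
    (h2 : ∀ i, 2 ≤ (ℓ i).card)
    (hexc : ¬(Odd n ∧ (∀ i, (ℓ i).card = 2) ∧ ∀ i j, ℓ i = ℓ j)) :
    ∃ c : Fin n → ℕ, (∀ i, c i ∈ ℓ i) ∧ ∀ i, c i ≠ c (i + 1) := by
  have hval1 : (1 : Fin n).val = 1 := by
    rw [Fin.val_one']; exact Nat.mod_eq_of_lt (by omega)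
  have hvadd : ∀ x : Fin n, x.val + 1 < n → (x + 1).val = x.val + 1 := by
    intro x hx
    rw [Fin.add_def, hval1]
    exact Nat.mod_eq_of_lt hx
  have hneg1 : (-1 : Fin n).val = n - 1 := by
    rw [Fin.neg_def]
    simp [Fin.val_one', Nat.mod_eq_of_lt (show 1 < n by omega)]
  by_cases hA : ∃ k : Fin n, ℓ k ≠ ℓ (k + 1)
  · obtain ⟨k, hk⟩ := hA
    have hcases : (∃ a, a ∈ ℓ (k + 1) ∧ a ∉ ℓ k) ∨ (∃ a, a ∈ ℓ k ∧ a ∉ ℓ (k + 1)) := by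
      by_contra h
      push_neg at h
      exact hk (Finset.Subset.antisymm (fun x hx => h.2 x hx) (fun x hx => h.1 x hx))
    rcases hcases with ⟨a, ha1, ha2⟩ | ⟨a, ha1, ha2⟩
    · -- colour forwards starting from edge k+1
      set ℓ' : ℕ → Finset ℕ := fun m => ℓ (k + 1 + (m : Fin n)) with hℓ'
      have hc' : ∀ j, 1 < (ℓ' j).card := fun j => h2 _
      have ha0 : a ∈ ℓ' 0 := by simpa [hℓ'] using ha1
      have hrel : ∀ i : Fin n, ℓ' ((i - (k + 1)).val) = ℓ i := by
        intro i
        simp only [hℓ', Fin.cast_val_eq_self]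
        congr 1
        ring
      refine ⟨fun i => greedyCol ℓ' a ((i - (k + 1)).val), ?_, ?_⟩
      · intro i
        beta_reduce
        rw [← hrel i]
        exact greedyCol_mem ℓ' a ha0 hc' _
      · intro i
        beta_reduce
        by_cases hik : i = k
        · subst hik
          have h0 : ((i + 1) - (i + 1)).val = 0 := by simp
          have hmem : greedyCol ℓ' a ((i - (i + 1)).val) ∈ ℓ i := by
            rw [← hrel i]
            exact greedyCol_mem ℓ' a ha0 hc' _
          rw [h0]
          intro hEq
          rw [hEq, show greedyCol ℓ' a 0 = a from rfl] at hmem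
          exact ha2 hmem
        · have hxne : i - (k + 1) ≠ -1 := by
            intro h
            apply hik
            have : i - (k + 1) + (k + 1) = -1 + (k + 1) := by rw [h]
            simp only [sub_add_cancel] at this
            rw [this]; ring
          have hxlt : (i - (k + 1)).val + 1 < n := by
            have h1 := (i - (k + 1)).isLt
            have h2' : (i - (k + 1)).val ≠ n - 1 := by
              intro h
              exact hxne (Fin.val_injective (by rw [h, hneg1]))
            omega
          have hsucc : ((i + 1) - (k + 1)).val = (i - (k + 1)).val + 1 := by
            have : (i + 1) - (k + 1) = (i - (k + 1)) + 1 := by ring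
            rw [this, hvadd _ hxlt]
          rw [hsucc]
          exact ((greedyCol_succ_spec ℓ' a _ (hc' _)).2).symm
    · -- colour backwards starting from edge k
      set ℓ' : ℕ → Finset ℕ := fun m => ℓ (k - (m : Fin n)) with hℓ'
      have hc' : ∀ j, 1 < (ℓ' j).card := fun j => h2 _
      have ha0 : a ∈ ℓ' 0 := by simpa [hℓ'] using ha1
      have hrel : ∀ i : Fin n, ℓ' ((k - i).val) = ℓ i := by
        intro i
        simp only [hℓ', Fin.cast_val_eq_self]
        congr 1
        ring
      refine ⟨fun i => greedyCol ℓ' a ((k - i).val), ?_, ?_⟩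
      · intro i
        beta_reduce
        rw [← hrel i]
        exact greedyCol_mem ℓ' a ha0 hc' _
      · intro i
        beta_reduce
        by_cases hik : i = k
        · subst hik
          have h0 : (i - i).val = 0 := by simp
          have hmem : greedyCol ℓ' a ((i - (i + 1)).val) ∈ ℓ (i + 1) := by
            rw [← hrel (i + 1)]
            exact greedyCol_mem ℓ' a ha0 hc' _
          rw [h0]
          intro hEq
          rw [← hEq, show greedyCol ℓ' a 0 = a from rfl] at hmem
          exact ha2 hmem
        · have hxne : k - (i + 1) ≠ -1 := by
            intro h
            apply hik
            have h' : k - (i + 1) + (i + 1) = -1 + (i + 1) := by rw [h]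
            simp only [sub_add_cancel] at h'
            have : i = k := by
              have := h'
              -- k = -1 + (i+1) = i
              rw [this]; ring
            exact this
          have hxlt : (k - (i + 1)).val + 1 < n := by
            have h1 := (k - (i + 1)).isLt
            have h2' : (k - (i + 1)).val ≠ n - 1 := by
              intro h
              exact hxne (Fin.val_injective (by rw [h, hneg1]))
            omega
          have hsucc : (k - i).val = (k - (i + 1)).val + 1 := by
            have : k - i = (k - (i + 1)) + 1 := by ring
            rw [this, hvadd _ hxlt]
          rw [hsucc]
          exact (greedyCol_succ_spec ℓ' a _ (hc' _)).2
  · -- all lists are equal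
    push_neg at hA
    have key : ∀ (m : ℕ) (i : Fin n), ℓ i = ℓ (i + (m : Fin n)) := by
      intro m
      induction m with
      | zero => simp
      | succ m ih =>
        intro i
        have hc : ((m + 1 : ℕ) : Fin n) = (m : Fin n) + 1 := by push_cast; ring
        rw [hc, ← add_assoc]
        exact (ih i).trans (hA (i + (m : Fin n)))
    have hall : ∀ i j : Fin n, ℓ i = ℓ j := by
      intro i j
      have h := key ((j - i).val) i
      rw [Fin.cast_val_eq_self] at h
      have h' : i + (j - i) = j := by ring
      rwa [h'] at h
    obtain ⟨x1, hx1⟩ := Finset.card_pos.mp (show 0 < (ℓ 0).card by have := h2 0; omega)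
    obtain ⟨x2, hx2, hx21⟩ := Finset.exists_mem_ne (show 1 < (ℓ 0).card by
      have := h2 0; omega) x1
    by_cases h3 : 2 < (ℓ 0).card
    · -- three colours available
      have hsd : ((ℓ 0) \ {x1, x2}).Nonempty := by
        rw [Finset.sdiff_nonempty]
        intro hsub
        have hle := Finset.card_le_card hsub
        have : ({x1, x2} : Finset ℕ).card ≤ 2 := Finset.card_insert_le _ _ |>.trans (by simp)
        omega
      obtain ⟨x3, hx3⟩ := hsd
      rw [Finset.mem_sdiff, Finset.mem_insert, Finset.mem_singleton] at hx3
      push_neg at hx3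
      obtain ⟨hx3L, hx31, hx32⟩ := hx3
      refine ⟨fun i => if i.val = n - 1 then x3 else if Even i.val then x1 else x2, ?_, ?_⟩
      · intro i
        beta_reduce
        rw [hall i 0]
        split_ifs <;> assumption
      · intro i
        beta_reduce
        by_cases hi : i.val = n - 1
        · have hi' : i = -1 := Fin.val_injective (by rw [hi, hneg1])
          have h0 : i + 1 = 0 := by rw [hi']; ring
          rw [h0]
          simp only [hi, if_pos rfl, Fin.val_zero]
          have : ¬((0 : ℕ) = n - 1) := by omega
          show x3 ≠ (if (0 : ℕ) = n - 1 then x3 else if Even (0 : ℕ) then x1 else x2)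
          rw [if_neg this, if_pos (Even.zero)]
          exact hx31
        · have hlt : i.val + 1 < n := by have := i.isLt; omega
          have hv : (i + 1).val = i.val + 1 := hvadd _ hlt
          by_cases hi2 : i.val = n - 2
          · have : (i + 1).val = n - 1 := by omega
            rw [if_neg hi, this]  -- LHS reduce
            simp only [if_pos rfl]
            split_ifs
            · exact fun h => hx31 h.symm
            · exact fun h => hx32 h.symm
          · have hnn : (i + 1).val ≠ n - 1 := by omega
            rw [if_neg hi, if_neg hnn]
            rcases Nat.even_or_odd i.val with he | ho
            · rw [if_pos he, hv, if_neg (by simp [Nat.even_add_one, he])]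
              exact hx21.symm
            · rw [if_neg (Nat.not_even_iff_odd.mpr ho), hv,
                if_pos (Nat.even_add_one.mpr (Nat.not_even_iff_odd.mpr ho))]
              exact hx21
    · -- all lists have exactly two colours; n must be even
      have hcard : ∀ i, (ℓ i).card = 2 := by
        intro i
        rw [hall i 0]
        have := h2 0
        omega
      have hev : Even n := by
        rcases Nat.even_or_odd n with h | h
        · exact h
        · exact absurd ⟨h, hcard, hall⟩ hexc
      refine ⟨fun i => if Even i.val then x1 else x2, ?_, ?_⟩
      · intro i
        beta_reduce
        rw [hall i 0]
        split_ifs <;> assumption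
      · intro i
        beta_reduce
        by_cases hi : i.val = n - 1
        · have hi' : i = -1 := Fin.val_injective (by rw [hi, hneg1])
          have h0 : i + 1 = 0 := by rw [hi']; ring
          rw [h0]
          have hodd : ¬ Even i.val := by
            rw [hi]
            intro h
            rcases hev with ⟨m, hm⟩
            rcases h with ⟨l, hl⟩
            omega
          rw [if_neg hodd]
          simp only [Fin.val_zero, if_pos Even.zero]
          exact hx21
        · have hlt : i.val + 1 < n := by have := i.isLt; omega
          have hv : (i + 1).val = i.val + 1 := hvadd _ hlt
          rcases Nat.even_or_odd i.val with he | ho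
          · rw [if_pos he, hv, if_neg (by simp [Nat.even_add_one, he])]
            exact hx21.symm
          · rw [if_neg (Nat.not_even_iff_odd.mpr ho), hv,
              if_pos (Nat.even_add_one.mpr (Nat.not_even_iff_odd.mpr ho))]
            exact hx21

/-- a cycle with lists of size at least 2 on its edges has a proper
list edge-colouring, unless it is an odd cycle whose lists are all identical of
size exactly 2. -/
theorem stmt1 (n : ℕ) (hn : 3 ≤ n) (L : Sym2 (Fin n) → Finset ℕ)
    (hL : ∀ e ∈ (SimpleGraph.cycleGraph n).edgeSet, 2 ≤ (L e).card)
    (hexc : ¬(Odd n ∧ (∀ e ∈ (SimpleGraph.cycleGraph n).edgeSet, (L e).card = 2) ∧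
      ∀ e ∈ (SimpleGraph.cycleGraph n).edgeSet,
        ∀ f ∈ (SimpleGraph.cycleGraph n).edgeSet, L e = L f)) :
    ∃ C, IsListEdgeColoring (SimpleGraph.cycleGraph n) L C := by
  classical
  haveI : NeZero n := ⟨by omega⟩
  have hval1 : (1 : Fin n).val = 1 := by
    rw [Fin.val_one']; exact Nat.mod_eq_of_lt (by omega)
  set G := SimpleGraph.cycleGraph n with hG
  set E : Fin n → Sym2 (Fin n) := fun i => s(i, i + 1) with hE
  have hadjE : ∀ i : Fin n, G.Adj i (i + 1) := by
    intro i
    rw [hG, SimpleGraph.cycleGraph_adj']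
    right
    have h : (i + 1) - i = 1 := by ring
    rw [h, hval1]
  have hmemE : ∀ e, e ∈ G.edgeSet ↔ ∃ i, e = E i := by
    intro e
    constructor
    · induction e using Sym2.ind with
      | _ u v =>
        intro he
        rw [SimpleGraph.mem_edgeSet, hG, SimpleGraph.cycleGraph_adj'] at he
        rcases he with h | h
        · have h1 : u - v = 1 := Fin.val_injective (by rw [h, hval1])
          have h2 : u = v + 1 := by
            have := h1
            calc u = v + (u - v) := by ring
            _ = v + 1 := by rw [h1]
          exact ⟨v, by rw [hE, h2, Sym2.eq_swap]⟩
        · have h1 : v - u = 1 := Fin.val_injective (by rw [h, hval1])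
          have h2 : v = u + 1 := by
            calc v = u + (v - u) := by ring
            _ = u + 1 := by rw [h1]
          exact ⟨u, by rw [hE, h2]⟩
    · rintro ⟨i, rfl⟩
      exact hadjE i
  have hEinj : Function.Injective E := by
    intro i j h
    simp only [hE, Sym2.eq, Sym2.rel_iff', Prod.mk.injEq, Prod.swap_prod_mk] at h
    rcases h with ⟨h1, _⟩ | ⟨h1, h2⟩
    · exact h1
    · exfalso
      have e3 : i + (1 + 1) = i + 0 := by
        rw [add_zero, ← add_assoc, h2, ← h1]
      have e5 : ((1 : Fin n) + 1) = 0 := add_left_cancel e3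
      have e6 : ((1 : Fin n) + 1).val = (1 + 1) % n := by
        rw [Fin.add_def, hval1]
      rw [e5, Fin.val_zero, Nat.mod_eq_of_lt (by omega)] at e6
      omega
  obtain ⟨c, hc1, hc2⟩ := cycle_core n hn (fun i => L (E i))
    (fun i => hL _ ((hmemE _).mpr ⟨i, rfl⟩))
    (by
      rintro ⟨hodd, hcard, heq⟩
      refine hexc ⟨hodd, ?_, ?_⟩
      · intro e he
        obtain ⟨i, rfl⟩ := (hmemE e).mp he
        exact hcard i
      · intro e he f hf
        obtain ⟨i, rfl⟩ := (hmemE e).mp he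
        obtain ⟨j, rfl⟩ := (hmemE f).mp hf
        exact heq i j)
  set C : Sym2 (Fin n) → ℕ := fun e => if h : ∃ i, e = E i then c h.choose else 0 with hC
  have hCE : ∀ i, C (E i) = c i := by
    intro i
    have hex : ∃ j, E i = E j := ⟨i, rfl⟩
    simp only [hC]
    rw [dif_pos hex]
    exact congrArg c (hEinj hex.choose_spec).symm
  refine ⟨C, ?_, ?_⟩
  · intro e he
    obtain ⟨i, rfl⟩ := (hmemE e).mp he
    rw [hCE i]
    exact hc1 i
  · intro e f hadj
    obtain ⟨he, hf, hef, v, hve, hvf⟩ := hadj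
    obtain ⟨i, rfl⟩ := (hmemE e).mp he
    obtain ⟨j, rfl⟩ := (hmemE f).mp hf
    rw [hCE i, hCE j]
    have hij : i ≠ j := fun h => hef (by rw [h])
    simp only [hE, Sym2.mem_iff] at hve hvf
    rcases hve with rfl | h1 <;> rcases hvf with h2 | h2
    · exact absurd h2 hij
    · -- v = i, v = j + 1 : i = j + 1
      rw [h2]
      exact (hc2 j).symm
    · -- v = i + 1, v = j
      rw [← h2, h1]
      exact hc2 i
    · -- i + 1 = j + 1
      rw [h1] at h2
      exact absurd (add_right_cancel h2) hij
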